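/- With Λ even self-dual with respect to ⊘, χ ∈ Λ, δ = χ/2 ∉ Λ, δ ⊘ δ ∈ ℤ, the shifted lattice Λ_O := Λ₀ ∪ Λ₃ is self-dual with respect to ⊘: Λ_O* = Λ_O. -/

import Mathlib

noncomputable section

/-- The dual of a subset of `ℝ^N` with respect to the bilinear form `g`. -/
def dualSet {N : ℕ} (g : LinearMap.BilinForm ℝ (Fin N → ℝ)) (L : Set (Fin N → ℝ)) :
    Set (Fin N → ℝ) :=
  {x | ∀ l ∈ L, ∃ k : ℤ, g x l = (k : ℝ)}

/-- `Λ₀ = {λ ∈ Λ : χ ⊘ λ ∈ 2ℤ}`. -/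
def lambda0 {N : ℕ} (g : LinearMap.BilinForm ℝ (Fin N → ℝ)) (Λ : AddSubgroup (Fin N → ℝ))
    (χ : Fin N → ℝ) : Set (Fin N → ℝ) :=
  {l | l ∈ Λ ∧ ∃ k : ℤ, g χ l = 2 * (k : ℝ)}

/-- `Λ₁ = {λ ∈ Λ : χ ⊘ λ ∈ 2ℤ + 1}`. -/
def lambda1 {N : ℕ} (g : LinearMap.BilinForm ℝ (Fin N → ℝ)) (Λ : AddSubgroup (Fin N → ℝ))
    (χ : Fin N → ℝ) : Set (Fin N → ℝ) :=
  {l | l ∈ Λ ∧ ∃ k : ℤ, g χ l = 2 * (k : ℝ) + 1}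

/-- The shift `L + v` of a subset `L ⊆ ℝ^N` by the vector `v`. -/
def shiftSet {N : ℕ} (L : Set (Fin N → ℝ)) (v : Fin N → ℝ) : Set (Fin N → ℝ) :=
  (· + v) '' L

/-- integer -/
abbrev II (r : ℝ) : Prop := ∃ k : ℤ, r = (k : ℝ)
/-- half-integer -/
abbrev HH (r : ℝ) : Prop := ∃ k : ℤ, r = (k : ℝ) + 1/2

lemma II.add' {a b : ℝ} (ha : II a) (hb : II b) : II (a + b) := by
  obtain ⟨k, rfl⟩ := ha; obtain ⟨m, rfl⟩ := hb; exact ⟨k + m, by push_cast; ring⟩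

lemma II.sub' {a b : ℝ} (ha : II a) (hb : II b) : II (a - b) := by
  obtain ⟨k, rfl⟩ := ha; obtain ⟨m, rfl⟩ := hb; exact ⟨k - m, by push_cast; ring⟩

lemma HH.add_II {a b : ℝ} (ha : HH a) (hb : II b) : HH (a + b) := by
  obtain ⟨k, rfl⟩ := ha; obtain ⟨m, rfl⟩ := hb; exact ⟨k + m, by push_cast; ring⟩

lemma HH.sub_II {a b : ℝ} (ha : HH a) (hb : II b) : HH (a - b) := by
  obtain ⟨k, rfl⟩ := ha; obtain ⟨m, rfl⟩ := hb; exact ⟨k - m, by push_cast; ring⟩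

lemma HH.add_HH {a b : ℝ} (ha : HH a) (hb : HH b) : II (a + b) := by
  obtain ⟨k, rfl⟩ := ha; obtain ⟨m, rfl⟩ := hb; exact ⟨k + m + 1, by push_cast; ring⟩

lemma HH.sub_HH {a b : ℝ} (ha : HH a) (hb : HH b) : II (a - b) := by
  obtain ⟨k, rfl⟩ := ha; obtain ⟨m, rfl⟩ := hb; exact ⟨k - m, by push_cast; ring⟩

lemma HH.not_II {a : ℝ} (ha : HH a) : ¬ II a := by
  obtain ⟨k, rfl⟩ := ha
  rintro ⟨m, hm⟩
  have : ((2*m : ℤ) : ℝ) = ((2*k+1 : ℤ) : ℝ) := by push_cast; linarith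
  have := Int.cast_injective (α := ℝ) this
  omega

/-- The shifted lattice `Λ_O := Λ₀ ∪ Λ₃` is self-dual with respect to `⊘`:
`Λ_O* = Λ_O`. -/
theorem statement3 {N : ℕ} (hN : 1 ≤ N)
    (g : LinearMap.BilinForm ℝ (Fin N → ℝ))
    (hsymm : ∀ x y, g x y = g y x)
    (hnondeg : ∀ x, (∀ y, g x y = 0) → x = 0)
    (Λ : AddSubgroup (Fin N → ℝ))
    (heven : ∀ l ∈ Λ, ∃ k : ℤ, g l l = 2 * (k : ℝ))
    (hselfdual : (Λ : Set (Fin N → ℝ)) = dualSet g (Λ : Set (Fin N → ℝ)))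
    (χ : Fin N → ℝ) (hχ : χ ∈ Λ)
    (δ : Fin N → ℝ) (hδdef : δ = (2 : ℝ)⁻¹ • χ)
    (hδnot : δ ∉ Λ)
    (hδint : ∃ k : ℤ, g δ δ = (k : ℝ))
    (Λ₂ Λ₃ : Set (Fin N → ℝ))
    (hcase0 : (∃ k : ℤ, g δ δ = 2 * (k : ℝ)) →
      Λ₂ = shiftSet (lambda1 g Λ χ) δ ∧ Λ₃ = shiftSet (lambda0 g Λ χ) δ)
    (hcase1 : (∃ k : ℤ, g δ δ = 2 * (k : ℝ) + 1) →
      Λ₂ = shiftSet (lambda0 g Λ χ) δ ∧ Λ₃ = shiftSet (lambda1 g Λ χ) δ) :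
    dualSet g (lambda0 g Λ χ ∪ Λ₃) = lambda0 g Λ χ ∪ Λ₃ := by
  -- membership in Λ is equivalent to membership in the dual set
  have hsd : ∀ x : Fin N → ℝ, x ∈ Λ ↔ ∀ l ∈ Λ, II (g x l) := by
    intro x
    constructor
    · intro hx l hl
      have : x ∈ dualSet g (Λ : Set (Fin N → ℝ)) := hselfdual ▸ hx
      exact this l hl
    · intro h
      have hx : x ∈ dualSet g (Λ : Set (Fin N → ℝ)) := fun l hl => h l hl
      rw [← hselfdual] at hx
      exact hx
  have hint : ∀ l ∈ Λ, ∀ m ∈ Λ, II (g l m) := fun l hl => (hsd l).1 hl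
  -- g δ y = 2⁻¹ * g χ y
  have hδy : ∀ y, g δ y = 2⁻¹ * g χ y := by
    intro y
    rw [hδdef]
    simp [LinearMap.map_smul₂, smul_eq_mul]
  -- parity split on Λ
  have hpar : ∀ l ∈ Λ, l ∈ lambda0 g Λ χ ∨ l ∈ lambda1 g Λ χ := by
    intro l hl
    obtain ⟨k, hk⟩ := hint χ hχ l hl
    rcases Int.even_or_odd k with ⟨m, hm⟩ | ⟨m, hm⟩
    · exact Or.inl ⟨hl, m, by rw [hk, hm]; push_cast; ring⟩
    · exact Or.inr ⟨hl, m, by rw [hk, hm]; push_cast; ring⟩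
  have hδ0 : ∀ l ∈ lambda0 g Λ χ, II (g δ l) := by
    rintro l ⟨hl, k, hk⟩
    exact ⟨k, by rw [hδy, hk]; ring⟩
  have hδ1 : ∀ l ∈ lambda1 g Λ χ, HH (g δ l) := by
    rintro l ⟨hl, k, hk⟩
    exact ⟨k, by rw [hδy, hk]; ring⟩
  -- a vector μ₀ ∈ Λ₁
  have hμ₀ : ∃ μ₀, μ₀ ∈ lambda1 g Λ χ := by
    by_contra h
    push_neg at h
    apply hδnot
    rw [hsd]
    intro l hl
    rcases hpar l hl with h0 | h1
    · exact hδ0 l h0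
    · exact absurd h1 (h l)
  obtain ⟨μ₀, hμ₀1⟩ := hμ₀
  obtain ⟨hμ₀Λ, kμ, hkμ⟩ := hμ₀1
  -- key lemma: dual of Λ₀ is Λ ∪ (δ + Λ)
  have key : ∀ x, (∀ l ∈ lambda0 g Λ χ, II (g x l)) → x ∈ Λ ∨ x - δ ∈ Λ := by
    intro x hx
    -- μ₀ + μ₀ ∈ Λ₀
    have h2μ : μ₀ + μ₀ ∈ lambda0 g Λ χ := by
      refine ⟨Λ.add_mem hμ₀Λ hμ₀Λ, 2 * kμ + 1, ?_⟩
      rw [map_add, hkμ]; push_cast; ring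
    obtain ⟨m, hm⟩ := hx _ h2μ
    rw [map_add] at hm
    -- the double of t := g x μ₀ is the integer m
    rcases Int.even_or_odd m with ⟨j, hj⟩ | ⟨j, hj⟩
    · -- t ∈ ℤ : x ∈ Λ
      left
      have ht : II (g x μ₀) := ⟨j, by subst hj; push_cast at hm ⊢; linarith⟩
      rw [hsd]
      intro l hl
      rcases hpar l hl with h0 | ⟨_, c, hc⟩
      · exact hx l h0
      · have hsub : l - μ₀ ∈ lambda0 g Λ χ := by
          refine ⟨Λ.sub_mem hl hμ₀Λ, c - kμ, ?_⟩
          rw [map_sub, hc, hkμ]; push_cast; ring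
        have := (hx _ hsub).add' ht
        rwa [map_sub, sub_add_cancel] at this
    · -- t ∈ ℤ + 1/2 : x - δ ∈ Λ
      right
      have ht : HH (g x μ₀) := ⟨j, by subst hj; push_cast at hm ⊢; linarith⟩
      rw [hsd]
      intro l hl
      have hsplit : g (x - δ) l = g x l - g δ l := by
        rw [map_sub]; rfl
      rw [hsplit]
      rcases hpar l hl with h0 | h1
      · exact (hx l h0).sub' (hδ0 l h0)
      · obtain ⟨-, c, hc⟩ := id h1
        have hsub : l - μ₀ ∈ lambda0 g Λ χ := by
          refine ⟨Λ.sub_mem hl hμ₀Λ, c - kμ, ?_⟩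
          rw [map_sub, hc, hkμ]; push_cast; ring
        have hxl : HH (g x l) := by
          have := ht.add_II (hx _ hsub)
          rwa [map_sub, add_sub_cancel] at this
        exact hxl.sub_HH (hδ1 l h1)
  -- the backward inclusion pieces common to both cases
  have hmem0 : ∀ l, l ∈ lambda0 g Λ χ → l ∈ Λ := fun l hl => hl.1
  -- split on parity of g δ δ
  obtain ⟨kq, hkq⟩ := hδint
  have hsymδ0 : ∀ l ∈ lambda0 g Λ χ, II (g l δ) := by
    intro l hl; rw [hsymm]; exact hδ0 l hl
  have hsymδ1 : ∀ l ∈ lambda1 g Λ χ, HH (g l δ) := by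
    intro l hl; rw [hsymm]; exact hδ1 l hl
  rcases Int.even_or_odd kq with ⟨j, hj⟩ | ⟨j, hj⟩
  · -- even case: Λ₃ = Λ₀ + δ
    have hq : II (g δ δ) := ⟨kq, hkq⟩
    obtain ⟨-, hΛ3⟩ := hcase0 ⟨j, by rw [hkq, hj]; push_cast; ring⟩
    subst hΛ3
    ext x
    constructor
    · intro hx
      have h0 : ∀ l ∈ lambda0 g Λ χ, II (g x l) := fun l hl => hx l (Or.inl hl)
      have h3 : ∀ l ∈ lambda0 g Λ χ, II (g x (l + δ)) := fun l hl =>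
        hx (l + δ) (Or.inr ⟨l, hl, rfl⟩)
      have hxδ : II (g x δ) := by
        have h00 : (0 : Fin N → ℝ) ∈ lambda0 g Λ χ := ⟨Λ.zero_mem, 0, by simp⟩
        have := h3 0 h00
        rwa [zero_add] at this
      rcases key x h0 with hxΛ | hxδΛ
      · left
        obtain ⟨k, hk⟩ := hxδ
        refine ⟨hxΛ, k, ?_⟩
        have : g x δ = 2⁻¹ * g χ x := by rw [hsymm x δ, hδy]
        rw [this] at hk
        linarith
      · right
        refine ⟨x - δ, ?_, by simp⟩
        have hcomp : g x δ = g (x - δ) δ + g δ δ := by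
          rw [map_sub]; simp
        have hld : II (g (x - δ) δ) := by
          obtain ⟨a, ha⟩ := hxδ
          obtain ⟨b, hb⟩ := hq
          rw [hcomp] at ha
          exact ⟨a - b, by push_cast; linarith⟩
        obtain ⟨k, hk⟩ := hld
        refine ⟨hxδΛ, k, ?_⟩
        have : g (x - δ) δ = 2⁻¹ * g χ (x - δ) := by rw [hsymm, hδy]
        rw [this] at hk
        linarith
    · rintro (hx | ⟨lx, hlx, rfl⟩)
      · rintro l (hl | ⟨ll, hll, rfl⟩)
        · exact hint x hx.1 l hl.1
        · have : g x (ll + δ) = g x ll + g x δ := by rw [map_add]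
          rw [this]
          exact (hint x hx.1 ll hll.1).add' (hsymδ0 x hx)
      · rintro l (hl | ⟨ll, hll, rfl⟩)
        · have : g (lx + δ) l = g lx l + g δ l := by rw [map_add]; rfl
          rw [this]
          exact (hint lx hlx.1 l hl.1).add' (hδ0 l hl)
        · have : g (lx + δ) (ll + δ) = (g lx ll + g lx δ) + (g δ ll + g δ δ) := by
            simp only [map_add, LinearMap.add_apply]; ring
          rw [this]
          exact ((hint lx hlx.1 ll hll.1).add' (hsymδ0 lx hlx)).add'
            ((hδ0 ll hll).add' hq)
  · -- odd case: Λ₃ = Λ₁ + δ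
    have hq : II (g δ δ) := ⟨kq, hkq⟩
    obtain ⟨-, hΛ3⟩ := hcase1 ⟨j, by rw [hkq, hj]; push_cast; ring⟩
    subst hΛ3
    ext x
    constructor
    · intro hx
      have h0 : ∀ l ∈ lambda0 g Λ χ, II (g x l) := fun l hl => hx l (Or.inl hl)
      have h3 : ∀ l ∈ lambda1 g Λ χ, II (g x (l + δ)) := fun l hl =>
        hx (l + δ) (Or.inr ⟨l, hl, rfl⟩)
      rcases key x h0 with hxΛ | hxδΛ
      · left
        rcases hpar x hxΛ with h | h
        · exact h
        · exfalso
          have := h3 μ₀ ⟨hμ₀Λ, kμ, hkμ⟩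
          rw [map_add] at this
          have hxμ : II (g x μ₀) := hint x hxΛ μ₀ hμ₀Λ
          have hxδ : HH (g x δ) := by rw [hsymm]; exact hδ1 x h
          exact (hxδ.add_II hxμ).not_II (by rwa [add_comm] at this)
      · right
        refine ⟨x - δ, ?_, by simp⟩
        have := h3 μ₀ ⟨hμ₀Λ, kμ, hkμ⟩
        have hcomp : g x (μ₀ + δ) = g (x - δ) μ₀ + g (x - δ) δ + (g δ μ₀ + g δ δ) := by
          rw [map_add, map_sub, LinearMap.sub_apply, LinearMap.sub_apply]; ring
        rw [hcomp] at this
        have hδμ : HH (g δ μ₀) := hδ1 μ₀ ⟨hμ₀Λ, kμ, hkμ⟩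
        have hlm : II (g (x - δ) μ₀) := hint _ hxδΛ μ₀ hμ₀Λ
        -- deduce g (x-δ) δ is a half integer
        have hld : HH (g (x - δ) δ) := by
          obtain ⟨a, ha⟩ := this
          obtain ⟨b, hb⟩ := hδμ
          obtain ⟨c, hc⟩ := hlm
          obtain ⟨d, hd⟩ := hq
          exact ⟨a - b - c - d - 1, by push_cast; linarith⟩
        obtain ⟨k, hk⟩ := hld
        refine ⟨hxδΛ, k, ?_⟩
        have heq : g (x - δ) δ = 2⁻¹ * g χ (x - δ) := by rw [hsymm, hδy]
        rw [heq] at hk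
        linarith
    · rintro (hx | ⟨lx, hlx, rfl⟩)
      · rintro l (hl | ⟨ll, hll, rfl⟩)
        · exact hint x hx.1 l hl.1
        · have : g x (ll + δ) = g x ll + g x δ := by rw [map_add]
          rw [this]
          exact (hint x hx.1 ll hll.1).add' (by rw [hsymm]; exact hδ0 x hx)
      · rintro l (hl | ⟨ll, hll, rfl⟩)
        · have : g (lx + δ) l = g lx l + g δ l := by rw [map_add]; rfl
          rw [this]
          exact (hint lx hlx.1 l hl.1).add' (hδ0 l hl)
        · have : g (lx + δ) (ll + δ) = (g lx δ + g δ ll) + (g lx ll + g δ δ) := by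
            simp only [map_add, LinearMap.add_apply]; ring
          rw [this]
          exact ((hsymδ1 lx hlx).add_HH (hδ1 ll hll)).add'
            ((hint lx hlx.1 ll hll.1).add' hq)
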